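/- The submonoid W_M · Λ̌⁺_G is saturated in the weight lattice Λ̌: if λ̌ ∈ Λ̌ and n·λ̌ ∈ W_M · Λ̌⁺_G for some positive integer n, then λ̌ ∈ W_M · Λ̌⁺_G. Equivalently, W_M·Λ̌⁺_G equals the intersection of Λ̌ with the rational cone it generates in Λ̌ ⊗ ℚ. -/

import Mathlib

/-- Combinatorial (co)weight data of a connected reductive group `G` together with a
parabolic subgroup `P` with Levi factor `M`:  `Λ` is the coweight lattice, `Λd` the
weight lattice, `pair` the canonical pairing, `ΓG` the vertices of the Dynkin diagram
of `G`, `ΓM ⊆ ΓG` those of `M`, `coroot`/`root` the simple coroots/roots and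
`posCoroot` the set of positive coroots of `G`. -/
structure LeviRootData (Λ Λd : Type*) [AddCommGroup Λ] [AddCommGroup Λd] where
  pair : Λd →+ Λ →+ ℤ
  ΓG : Type
  finΓG : Finite ΓG
  coroot : ΓG → Λ
  root : ΓG → Λd
  posCoroot : Set Λ
  ΓM : Set ΓG
  pair_self : ∀ i, pair (root i) (coroot i) = 2
  pair_nonpos : ∀ i j, i ≠ j → pair (root i) (coroot j) ≤ 0
  coroot_mem : ∀ i, coroot i ∈ posCoroot
  posCoroot_le : ∀ α ∈ posCoroot, α ∈ AddSubmonoid.closure (Set.range coroot)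

namespace LeviRootData

variable {Λ Λd : Type*} [AddCommGroup Λ] [AddCommGroup Λd] (d : LeviRootData Λ Λd)

/-- The positive coroots of the Levi `M`: the positive coroots of `G` that are coroots
of `M`, i.e. lie in the span of the simple coroots of `M`. -/
def posCorootM : Set Λ :=
  {α | α ∈ d.posCoroot ∧ α ∈ AddSubgroup.closure (d.coroot '' d.ΓM)}

/-- `Λ^pos_G`: the non-negative integral span of the positive coroots of `G`. -/
def posG : AddSubmonoid Λ := AddSubmonoid.closure d.posCoroot

/-- `Λ^pos_{U(P)}`: the non-negative integral span of the positive coroots of `G`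
that are not coroots of `M`. -/
def posUP : AddSubmonoid Λ := AddSubmonoid.closure (d.posCoroot \ d.posCorootM)

/-- The non-negative integral span of the simple coroots of `M` (defining `≤_M` on `Λ`). -/
def posMco : AddSubmonoid Λ := AddSubmonoid.closure (d.coroot '' d.ΓM)

/-- `Λ̌^pos_M`: the non-negative integral span of the simple roots of `M`
(defining `≤_M` on `Λ̌`). -/
def posMd : AddSubmonoid Λd := AddSubmonoid.closure (d.root '' d.ΓM)

/-- `Λ̌^pos_G`: the non-negative integral span of the (simple, equivalently positive)
roots of `G`. -/
def posGd : AddSubmonoid Λd := AddSubmonoid.closure (Set.range d.root)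

/-- The simple reflection `s_i` acting on the coweight lattice. -/
def refl (i : d.ΓG) : AddAut Λ where
  toFun x := x - d.pair (d.root i) x • d.coroot i
  invFun x := x - d.pair (d.root i) x • d.coroot i
  left_inv x := by
    have h := d.pair_self i
    simp only [map_sub, map_zsmul, h, smul_eq_mul]
    module
  right_inv x := by
    have h := d.pair_self i
    simp only [map_sub, map_zsmul, h, smul_eq_mul]
    module
  map_add' x y := by simp only [map_add, add_smul]; abel

/-- The simple reflection `s_i` acting on the weight lattice. -/
def reflD (i : d.ΓG) : AddAut Λd where
  toFun x := x - d.pair.flip (d.coroot i) x • d.root i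
  invFun x := x - d.pair.flip (d.coroot i) x • d.root i
  left_inv x := by
    have h : d.pair.flip (d.coroot i) (d.root i) = 2 := d.pair_self i
    simp only [map_sub, map_zsmul, h, smul_eq_mul]
    module
  right_inv x := by
    have h : d.pair.flip (d.coroot i) (d.root i) = 2 := d.pair_self i
    simp only [map_sub, map_zsmul, h, smul_eq_mul]
    module
  map_add' x y := by simp only [map_add, add_smul]; abel

/-- The Weyl group `W_M` of the Levi `M`, acting on the coweight lattice. -/
def WM : AddSubgroup (AddAut Λ) := AddSubgroup.closure (d.refl '' d.ΓM)

/-- The Weyl group `W_M` of the Levi `M`, acting on the weight lattice. -/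
def WMd : AddSubgroup (AddAut Λd) := AddSubgroup.closure (d.reflD '' d.ΓM)

/-- The Weyl group `W` of `G`, acting on the weight lattice. -/
def WGd : AddSubgroup (AddAut Λd) := AddSubgroup.closure (Set.range d.reflD)

/-- `Λ̌⁺_G`: the dominant weights of `G`. -/
def domG : Set Λd := {x | ∀ i, 0 ≤ d.pair x (d.coroot i)}

/-- `Λ̌⁺_M`: the `M`-dominant weights. -/
def domM : Set Λd := {x | ∀ i ∈ d.ΓM, 0 ≤ d.pair x (d.coroot i)}

/-- `Λ⁺_M`: the `M`-dominant coweights. -/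
def codomM : Set Λ := {x | ∀ i ∈ d.ΓM, 0 ≤ d.pair (d.root i) x}

/-- `W_M · Λ̌⁺_G`: the union of the `W_M`-orbits of the `G`-dominant weights. -/
def WMdom : Set Λd := {x | ∃ w ∈ d.WMd, ∃ y ∈ d.domG, x = w y}

end LeviRootData

/-- The submonoid `W_M · Λ̌⁺_G` is saturated in the weight lattice:
if `n • λ̌ ∈ W_M · Λ̌⁺_G` for a positive integer `n`, then `λ̌ ∈ W_M · Λ̌⁺_G`. -/
theorem stmt5 {Λ Λd : Type*} [AddCommGroup Λ] [AddCommGroup Λd]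
    (d : LeviRootData Λ Λd) (χ : Λd) (n : ℕ) (hn : 0 < n)
    (h : n • χ ∈ d.WMdom) : χ ∈ d.WMdom := by
  obtain ⟨w, hw, y, hy, hxy⟩ := h
  refine ⟨w, hw, (-w : AddAut Λd) χ, ?_, by simp⟩
  intro i
  have h2 : (-w : AddAut Λd) (n • χ) = y := by rw [hxy]; simp
  have h1 : (-w : AddAut Λd) (n • χ) = n • (-w : AddAut Λd) χ := map_nsmul _ _ _
  have hv := hy i
  rw [← h2, h1] at hv
  have hv' : (0:ℤ) ≤ (n : ℤ) * d.pair ((-w : AddAut Λd) χ) (d.coroot i) := by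
    simpa [smul_eq_mul] using hv
  have hn' : (0:ℤ) < n := by exact_mod_cast hn
  nlinarith [hv', hn']
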